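/- arXiv:1801.01798 — 5 statements merged into one kernel-verified Lean document; each statement's English description precedes it below -/
import Mathlib

section
/- Let Λ be any non-empty set. Then the Banach algebra M_Λ(ℂ) of Λ×Λ complex matrices with finite ℓ¹-norm has an ultra central approximate identity if and only if Λ is finite. -/
noncomputable section

open scoped Topology Classical

universe u v

/-- The bidual of a complex normed space. -/
abbrev Bidual (A : Type*) [SeminormedAddCommGroup A] [NormedSpace ℂ A] : Type _ :=
  StrongDual ℂ (StrongDual ℂ A)

section BidualActions

variable {A : Type*} [NonUnitalNormedRing A] [NormedSpace ℂ A]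
  [IsScalarTower ℂ A A] [SMulCommClass ℂ A A]

/-- The natural left action of `A` on its bidual (coming from the Arens products, which agree
when one factor lies in `A`): `(bidualLSMul a m) f = m (fun b => f (a * b))`. -/
def bidualLSMul (a : A) (m : Bidual A) : Bidual A :=
  m.comp ((ContinuousLinearMap.compL ℂ A A ℂ).flip (ContinuousLinearMap.mul ℂ A a))

/-- The natural right action of `A` on its bidual:
`(bidualRSMul m a) f = m (fun b => f (b * a))`. -/
def bidualRSMul (m : Bidual A) (a : A) : Bidual A :=
  m.comp ((ContinuousLinearMap.compL ℂ A A ℂ).flip ((ContinuousLinearMap.mul ℂ A).flip a))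

end BidualActions

/-- A Banach algebra `A` has an *ultra central approximate identity* if there is a net
`(e α)` in the bidual `A**` such that `a · e α = e α · a` for all `a ∈ A` and
`e α · a → a` in norm, `A` being identified with its canonical image in `A**`. -/
def HasUltraCentralApproximateIdentity (A : Type u) [NonUnitalNormedRing A] [NormedSpace ℂ A]
    [IsScalarTower ℂ A A] [SMulCommClass ℂ A A] : Prop :=
  ∃ (ι : Type u) (_ : Preorder ι) (_ : Nonempty ι) (_ : IsDirected ι (· ≤ ·))
    (e : ι → Bidual A),
    (∀ (a : A) (α : ι), bidualLSMul a (e α) = bidualRSMul (e α) a) ∧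
    ∀ a : A, Filter.Tendsto (fun α => bidualRSMul (e α) a) Filter.atTop
      (𝓝 (NormedSpace.inclusionInDoubleDual ℂ A a))

/-- `B` is (a realization of) the Banach algebra `M_Λ(ℂ)` of `Λ × Λ` complex matrices with
finite `ℓ¹`-norm and matrix multiplication, where `E i j` is the matrix unit with `1` in
position `(i, j)` and `0` elsewhere:  the matrix units multiply as usual, finitely supported
matrices have the `ℓ¹`-norm, and they are dense. -/
structure IsL1MatrixAlgebra (Λ : Type v) (B : Type u) [NonUnitalNormedRing B]
    [NormedSpace ℂ B] [IsScalarTower ℂ B B] [SMulCommClass ℂ B B] [CompleteSpace B]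
    (E : Λ → Λ → B) : Prop where
  mul_matrix_unit : ∀ i j k l, E i j * E k l = if j = k then E i l else 0
  norm_eq : ∀ x : (Λ × Λ) →₀ ℂ,
    ‖x.sum fun p c => c • E p.1 p.2‖ = x.sum fun _ c => ‖c‖
  dense : DenseRange fun x : (Λ × Λ) →₀ ℂ => x.sum fun p c => c • E p.1 p.2

/-! ### Auxiliary material for the proof -/

section Aux

set_option linter.unusedSectionVars false

section BidualApply

variable {A : Type*} [NonUnitalNormedRing A] [NormedSpace ℂ A]
  [IsScalarTower ℂ A A] [SMulCommClass ℂ A A]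

lemma bidualLSMul_apply' (a : A) (m : Bidual A) (f : StrongDual ℂ A) :
    bidualLSMul a m f = m (f.comp (ContinuousLinearMap.mul ℂ A a)) := rfl

lemma bidualRSMul_apply' (m : Bidual A) (a : A) (f : StrongDual ℂ A) :
    bidualRSMul m a f = m (f.comp ((ContinuousLinearMap.mul ℂ A).flip a)) := rfl

lemma comp_mul_apply' (a b : A) (f : StrongDual ℂ A) :
    f.comp (ContinuousLinearMap.mul ℂ A a) b = f (a * b) := rfl

lemma comp_mul_flip_apply' (a b : A) (f : StrongDual ℂ A) :
    f.comp ((ContinuousLinearMap.mul ℂ A).flip a) b = f (b * a) := rfl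

end BidualApply

variable {Λ : Type v} {B : Type u} [NonUnitalNormedRing B] [NormedSpace ℂ B]
  [IsScalarTower ℂ B B] [SMulCommClass ℂ B B] [CompleteSpace B]

/-- The linear map sending a finitely supported matrix to its realization in `B`. -/
def l1Phi (E : Λ → Λ → B) : ((Λ × Λ) →₀ ℂ) →ₗ[ℂ] B :=
  Finsupp.lsum ℂ fun p => LinearMap.toSpanSingleton ℂ B (E p.1 p.2)

lemma l1Phi_apply (E : Λ → Λ → B) (x : (Λ × Λ) →₀ ℂ) :
    l1Phi E x = x.sum fun p c => c • E p.1 p.2 := rfl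

lemma l1Phi_single (E : Λ → Λ → B) (p : Λ × Λ) (c : ℂ) :
    l1Phi E (Finsupp.single p c) = c • E p.1 p.2 := by
  rw [l1Phi_apply, Finsupp.sum_single_index]; simp

variable {E : Λ → Λ → B}

lemma norm_l1Phi (hE : ∀ x : (Λ × Λ) →₀ ℂ,
    ‖x.sum fun p c => c • E p.1 p.2‖ = x.sum fun _ c => ‖c‖) (x : (Λ × Λ) →₀ ℂ) :
    ‖l1Phi E x‖ = ∑ p ∈ x.support, ‖x p‖ := hE x

lemma l1Phi_injective (hE : ∀ x : (Λ × Λ) →₀ ℂ,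
    ‖x.sum fun p c => c • E p.1 p.2‖ = x.sum fun _ c => ‖c‖) :
    Function.Injective (l1Phi E) := by
  rw [injective_iff_map_eq_zero]
  intro x hx
  have h0 : ∑ p ∈ x.support, ‖x p‖ = 0 := by rw [← norm_l1Phi hE, hx, norm_zero]
  ext p
  by_cases hp : p ∈ x.support
  · have := (Finset.sum_eq_zero_iff_of_nonneg (fun q _ => norm_nonneg _)).mp h0 p hp
    simpa using norm_eq_zero.mp this
  · simpa using Finsupp.notMem_support_iff.mp hp

lemma dense_l1Phi (hd : DenseRange fun x : (Λ × Λ) →₀ ℂ => x.sum fun p c => c • E p.1 p.2) :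
    DenseRange (l1Phi E) := hd

/-- Two continuous maps agreeing on the image of `l1Phi` agree. -/
lemma l1_ext_dense (hd : DenseRange fun x : (Λ × Λ) →₀ ℂ => x.sum fun p c => c • E p.1 p.2)
    {F : Type*} [TopologicalSpace F] [T2Space F] {f g : B → F}
    (hf : Continuous f) (hg : Continuous g) (h : ∀ x, f (l1Phi E x) = g (l1Phi E x)) : f = g :=
  (dense_l1Phi hd).equalizer hf hg (funext h)

/-- Two continuous linear maps agreeing on the matrix units agree. -/
lemma l1_clm_ext_units (hd : DenseRange fun x : (Λ × Λ) →₀ ℂ => x.sum fun p c => c • E p.1 p.2)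
    {F : Type*} [NormedAddCommGroup F] [NormedSpace ℂ F] {f g : B →L[ℂ] F}
    (h : ∀ k l, f (E k l) = g (E k l)) : f = g := by
  have : (f : B → F) = g := by
    refine l1_ext_dense hd f.continuous g.continuous fun x => ?_
    show f ((l1Phi E) x) = g ((l1Phi E) x)
    rw [show (l1Phi E) x = x.sum fun p c => l1Phi E (Finsupp.single p c) by
      rw [← map_finsuppSum]; congr 1; exact (Finsupp.sum_single x).symm]
    rw [map_finsuppSum, map_finsuppSum]
    refine Finsupp.sum_congr fun p _ => ?_
    rw [l1Phi_single, map_smul, map_smul, h]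
  exact ContinuousLinearMap.ext fun b => congrFun this b

/-- There is a norm-one functional computing the sum of the entries over a finite set `T`. -/
lemma l1_exists_coordFn (hE : ∀ x : (Λ × Λ) →₀ ℂ,
    ‖x.sum fun p c => c • E p.1 p.2‖ = x.sum fun _ c => ‖c‖) (T : Finset (Λ × Λ)) :
    ∃ g : B →L[ℂ] ℂ, ‖g‖ ≤ 1 ∧ ∀ x : (Λ × Λ) →₀ ℂ, g (l1Phi E x) = ∑ p ∈ T, x p := by
  set ψ : ((Λ × Λ) →₀ ℂ) →ₗ[ℂ] ℂ := ∑ p ∈ T, Finsupp.lapply p with hψ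
  have hψ_apply : ∀ x, ψ x = ∑ p ∈ T, x p := by
    intro x; rw [hψ]; simp [LinearMap.sum_apply]
  have hbound : ∀ x : (Λ × Λ) →₀ ℂ, ‖ψ x‖ ≤ ‖l1Phi E x‖ := by
    intro x
    rw [hψ_apply, norm_l1Phi hE]
    calc ‖∑ p ∈ T, x p‖ ≤ ∑ p ∈ T, ‖x p‖ := norm_sum_le _ _
      _ = ∑ p ∈ T ∩ x.support, ‖x p‖ := by
          refine (Finset.sum_subset Finset.inter_subset_left ?_).symm
          intro p hp hp2
          have : x p = 0 := by
            by_contra h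
            exact hp2 (Finset.mem_inter.mpr ⟨hp, Finsupp.mem_support_iff.mpr h⟩)
          simp [this]
      _ ≤ ∑ p ∈ x.support, ‖x p‖ :=
          Finset.sum_le_sum_of_subset_of_nonneg Finset.inter_subset_right
            (fun _ _ _ => norm_nonneg _)
  set eq := LinearEquiv.ofInjective (l1Phi E) (l1Phi_injective hE)
  have hsymm : ∀ x : (Λ × Λ) →₀ ℂ, eq.symm ⟨l1Phi E x, ⟨x, rfl⟩⟩ = x := by
    intro x
    apply (l1Phi_injective hE)
    have := eq.apply_symm_apply ⟨l1Phi E x, ⟨x, rfl⟩⟩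
    calc l1Phi E (eq.symm ⟨l1Phi E x, ⟨x, rfl⟩⟩)
        = ((eq (eq.symm ⟨l1Phi E x, ⟨x, rfl⟩⟩)) : B) := rfl
      _ = l1Phi E x := by rw [this]
  set g₀ : LinearMap.range (l1Phi E) →ₗ[ℂ] ℂ := ψ.comp (eq.symm : _ →ₗ[ℂ] _) with hg₀def
  have hg₀ : ∀ y : LinearMap.range (l1Phi E), ‖g₀ y‖ ≤ 1 * ‖y‖ := by
    rintro ⟨y, hy⟩
    obtain ⟨x, rfl⟩ := hy
    simp only [hg₀def, LinearMap.comp_apply, LinearEquiv.coe_coe, hsymm x, one_mul]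
    exact hbound x
  set g₁ : LinearMap.range (l1Phi E) →L[ℂ] ℂ := LinearMap.mkContinuous g₀ 1 hg₀
  obtain ⟨g, hgval, hgnorm⟩ := exists_extension_norm_eq (LinearMap.range (l1Phi E)) g₁
  refine ⟨g, ?_, ?_⟩
  · rw [hgnorm]
    exact ContinuousLinearMap.opNorm_le_bound _ zero_le_one (fun y => hg₀ y)
  · intro x
    rw [hgval ⟨l1Phi E x, ⟨x, rfl⟩⟩]
    show g₀ _ = _
    simp only [hg₀def, LinearMap.comp_apply, LinearEquiv.coe_coe, hsymm x]
    exact hψ_apply x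

end Aux

/-- **Theorem 2.1.** For a non-empty set `Λ`, the Banach algebra `M_Λ(ℂ)` has an ultra central
approximate identity if and only if `Λ` is finite. -/
theorem l1MatrixAlgebra_hasUltraCentralApproximateIdentity_iff_finite
    (Λ : Type v) [Nonempty Λ] (B : Type u) [NonUnitalNormedRing B] [NormedSpace ℂ B]
    [IsScalarTower ℂ B B] [SMulCommClass ℂ B B] [CompleteSpace B]
    (E : Λ → Λ → B) (hE : IsL1MatrixAlgebra Λ B E) :
    HasUltraCentralApproximateIdentity B ↔ Finite Λ := by
  obtain ⟨hmul, hne, hd⟩ := hE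
  constructor
  · -- forward direction
    rintro ⟨ι, _, _, _, e, hcen, happ⟩
    choose C hC1 hC2 using fun T : Finset (Λ × Λ) => l1_exists_coordFn hne T
    have hCunit : ∀ (T : Finset (Λ × Λ)) (k l : Λ),
        C T (E k l) = if (k, l) ∈ T then 1 else 0 := by
      intro T k l
      have := hC2 T (Finsupp.single (k, l) 1)
      rw [l1Phi_single] at this
      simp only [one_smul] at this
      rw [this]
      simp only [Finsupp.single_apply]
      rw [Finset.sum_ite_eq T (k, l) (fun _ => (1 : ℂ))]
    -- consequence of centrality
    have key1 : ∀ (m : Bidual B) (i j : Λ),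
        bidualLSMul (E i j) m = bidualRSMul m (E i j) →
        m (C {(j, j)}) = m (C {(i, i)}) := by
      intro m i j hc
      have h1 : (C {(i, j)}).comp (ContinuousLinearMap.mul ℂ B (E i j)) = C {(j, j)} := by
        refine l1_clm_ext_units hd fun k l => ?_
        rw [ContinuousLinearMap.comp_apply]
        show C {(i, j)} (E i j * E k l) = C {(j, j)} (E k l)
        rw [hmul]
        by_cases hjk : j = k
        · subst hjk
          rw [if_pos rfl]
          simp only [hCunit, Finset.mem_singleton, Prod.mk.injEq]
        · rw [if_neg hjk, map_zero, hCunit]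
          simp [Ne.symm hjk]
      have h2 : (C {(i, j)}).comp ((ContinuousLinearMap.mul ℂ B).flip (E i j)) = C {(i, i)} := by
        refine l1_clm_ext_units hd fun k l => ?_
        rw [ContinuousLinearMap.comp_apply]
        show C {(i, j)} (E k l * E i j) = C {(i, i)} (E k l)
        rw [hmul]
        by_cases hli : l = i
        · subst hli
          rw [if_pos rfl]
          simp only [hCunit, Finset.mem_singleton, Prod.mk.injEq]
        · rw [if_neg hli, map_zero, hCunit]
          simp [hli]
      have := congrArg (fun m' : Bidual B => m' (C {(i, j)})) hc
      simp only [bidualLSMul_apply', bidualRSMul_apply'] at this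
      rwa [h1, h2] at this
    -- the approximate identity property at a diagonal unit
    have key2 : ∀ (m : Bidual B) (i : Λ),
        bidualRSMul m (E i i) (C {(i, i)}) = m (C {(i, i)}) := by
      intro m i
      have h : (C {(i, i)}).comp ((ContinuousLinearMap.mul ℂ B).flip (E i i)) = C {(i, i)} := by
        refine l1_clm_ext_units hd fun k l => ?_
        rw [ContinuousLinearMap.comp_apply]
        show C {(i, i)} (E k l * E i i) = C {(i, i)} (E k l)
        rw [hmul]
        by_cases hli : l = i
        · subst hli
          rw [if_pos rfl]
        · rw [if_neg hli, map_zero, hCunit]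
          simp [hli]
      rw [bidualRSMul_apply', h]
    obtain ⟨i₀⟩ := ‹Nonempty Λ›
    have htend : Filter.Tendsto (fun α => (e α) (C {(i₀, i₀)})) Filter.atTop (𝓝 1) := by
      have h1 := ((ContinuousLinearMap.apply ℂ ℂ (C {(i₀, i₀)})).continuous.tendsto _).comp
        (happ (E i₀ i₀))
      simp only [Function.comp_def, ContinuousLinearMap.apply_apply] at h1
      have h2 : ∀ α, bidualRSMul (e α) (E i₀ i₀) (C {(i₀, i₀)}) = (e α) (C {(i₀, i₀)}) :=
        fun α => key2 (e α) i₀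
      have h3 : (NormedSpace.inclusionInDoubleDual ℂ B (E i₀ i₀)) (C {(i₀, i₀)}) = 1 := by
        rw [NormedSpace.dual_def, hCunit]; simp
      rw [h3] at h1
      exact h1.congr fun α => h2 α
    have hev : ∀ᶠ α in Filter.atTop, (1 : ℝ) / 2 ≤ ‖(e α) (C {(i₀, i₀)})‖ := by
      have : Filter.Tendsto (fun α => ‖(e α) (C {(i₀, i₀)})‖) Filter.atTop (𝓝 ‖(1 : ℂ)‖) :=
        htend.norm
      rw [norm_one] at this
      exact this.eventually_const_le (by norm_num)
    obtain ⟨α, hα⟩ := hev.exists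
    set c : ℂ := (e α) (C {(i₀, i₀)}) with hc
    have hall : ∀ i : Λ, (e α) (C {(i, i)}) = c :=
      fun i => key1 (e α) i₀ i (hcen (E i₀ i) α)
    -- conclude Λ is finite
    by_contra hfin
    rw [not_finite_iff_infinite] at hfin
    set n : ℕ := ⌈2 * ‖e α‖⌉₊ + 1 with hn
    obtain ⟨S, hS⟩ := Infinite.exists_subset_card_eq Λ n
    have hsum : C (S.image fun i => (i, i)) = ∑ i ∈ S, C {(i, i)} := by
      refine l1_clm_ext_units hd fun k l => ?_
      rw [ContinuousLinearMap.sum_apply]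
      simp only [hCunit]
      by_cases hkl : k = l
      · subst hkl
        simp only [Finset.mem_image, Prod.mk.injEq]
        rw [Finset.sum_congr rfl (fun i _ => by
          show (if (k, k) ∈ ({(i, i)} : Finset (Λ × Λ)) then (1 : ℂ) else 0)
            = if k = i then 1 else 0
          simp [Prod.ext_iff, and_self, eq_comm])]
        rw [Finset.sum_ite_eq S k (fun _ => (1 : ℂ))]
        by_cases hk : k ∈ S <;> simp [hk]
      · have h1 : (k, l) ∉ S.image fun i => (i, i) := by
          simp only [Finset.mem_image, Prod.mk.injEq, not_exists]
          rintro i ⟨_, rfl, rfl⟩ ; exact hkl rfl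
        rw [if_neg h1]
        rw [Finset.sum_congr rfl (fun i _ => by
          show (if (k, l) ∈ ({(i, i)} : Finset (Λ × Λ)) then (1 : ℂ) else 0) = 0
          rw [if_neg]
          simp only [Finset.mem_singleton, Prod.mk.injEq, not_and]
          intro h1 h2; exact hkl (h1.trans h2.symm))]
        simp
    have hval : (e α) (C (S.image fun i => (i, i))) = (n : ℂ) * c := by
      rw [hsum, map_sum]
      rw [Finset.sum_congr rfl fun i _ => hall i]
      simp [hS]
    have hub : ‖(e α) (C (S.image fun i => (i, i)))‖ ≤ ‖e α‖ := by
      calc ‖(e α) (C (S.image fun i => (i, i)))‖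
          ≤ ‖e α‖ * ‖C (S.image fun i => (i, i))‖ := ContinuousLinearMap.le_opNorm _ _
        _ ≤ ‖e α‖ * 1 := by
            exact mul_le_mul_of_nonneg_left (hC1 _) (ContinuousLinearMap.opNorm_nonneg _)
        _ = ‖e α‖ := mul_one _
    rw [hval] at hub
    rw [norm_mul] at hub
    have h1 : (n : ℝ) * (1 / 2) ≤ (n : ℝ) * ‖c‖ := by
      refine mul_le_mul_of_nonneg_left hα (by positivity)
    have h2 : ‖((n : ℕ) : ℂ)‖ = (n : ℝ) := by
      simp
    rw [h2] at hub
    have h3 : 2 * ‖e α‖ < (n : ℝ) := by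
      have := Nat.le_ceil (2 * ‖e α‖)
      have h4 : ((⌈2 * ‖e α‖⌉₊ : ℕ) : ℝ) < (n : ℝ) := by
        rw [hn]; push_cast; linarith
      linarith
    linarith
  · -- backward direction
    intro hfin
    have : Fintype Λ := Fintype.ofFinite Λ
    set one : B := ∑ i : Λ, E i i with hone
    have hone_unit_r : ∀ k l : Λ, E k l * one = E k l := by
      intro k l
      rw [hone, Finset.mul_sum]
      rw [Finset.sum_congr rfl fun i _ => hmul k l i i]
      rw [Finset.sum_ite_eq Finset.univ l (fun i => E k i)]
      simp
    have hone_unit_l : ∀ k l : Λ, one * E k l = E k l := by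
      intro k l
      rw [hone, Finset.sum_mul]
      rw [Finset.sum_congr rfl fun i _ => hmul i i k l]
      rw [Finset.sum_ite_eq' Finset.univ k (fun i => E i l)]
      simp
    have hmul_one : ∀ b : B, b * one = b := by
      have := l1_ext_dense (E := E) hd (f := fun b : B => b * one) (g := fun b : B => b)
        (continuous_id.mul continuous_const) continuous_id (fun x => ?_)
      · exact fun b => congrFun this b
      · show (l1Phi E x) * one = l1Phi E x
        rw [l1Phi_apply, Finsupp.sum_mul]
        refine Finsupp.sum_congr fun p _ => ?_
        rw [smul_mul_assoc, hone_unit_r]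
    have hone_mul : ∀ b : B, one * b = b := by
      have := l1_ext_dense (E := E) hd (f := fun b : B => one * b) (g := fun b : B => b)
        (continuous_const.mul continuous_id) continuous_id (fun x => ?_)
      · exact fun b => congrFun this b
      · show one * (l1Phi E x) = l1Phi E x
        rw [l1Phi_apply, Finsupp.mul_sum]
        refine Finsupp.sum_congr fun p _ => ?_
        rw [mul_smul_comm, hone_unit_l]
    refine ⟨PUnit.{u + 1}, inferInstance, inferInstance, inferInstance,
      fun _ => NormedSpace.inclusionInDoubleDual ℂ B one, ?_, ?_⟩
    · intro a _
      refine ContinuousLinearMap.ext fun f => ?_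
      rw [bidualLSMul_apply', bidualRSMul_apply', NormedSpace.dual_def, NormedSpace.dual_def,
        comp_mul_apply', comp_mul_flip_apply', hmul_one, hone_mul]
    · intro a
      have : ∀ β : PUnit.{u + 1}, bidualRSMul (NormedSpace.inclusionInDoubleDual ℂ B one) a
          = NormedSpace.inclusionInDoubleDual ℂ B a := by
        intro β
        refine ContinuousLinearMap.ext fun f => ?_
        rw [bidualRSMul_apply', NormedSpace.dual_def, NormedSpace.dual_def,
          comp_mul_flip_apply', hone_mul]
      simp only [this PUnit.unit]
      exact tendsto_const_nhds
end
end

section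
/- Every amenable Banach algebra has an ultra central approximate identity. -/
noncomputable section

open scoped Topology Classical

universe u v w

/-- `T`, together with the continuous bilinear map `tmul`, is (a realization of) the
projective tensor product `A ⊗_p B` of the Banach algebras `A` and `B`:
`tmul` is contractive, multiplicative (`(a₁ ⊗ b₁)(a₂ ⊗ b₂) = a₁a₂ ⊗ b₁b₂`), every element of
`T` is approximated by finite sums of elementary tensors whose projective bound is close to
its norm, and every bounded bilinear functional on `A × B` factors through `tmul`. -/
structure IsProjectiveTensorProduct (A : Type u) (B : Type v) (T : Type w)
    [NonUnitalNormedRing A] [NormedSpace ℂ A] [IsScalarTower ℂ A A] [SMulCommClass ℂ A A]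
    [NonUnitalNormedRing B] [NormedSpace ℂ B] [IsScalarTower ℂ B B] [SMulCommClass ℂ B B]
    [NonUnitalNormedRing T] [NormedSpace ℂ T] [IsScalarTower ℂ T T] [SMulCommClass ℂ T T]
    [CompleteSpace T] (tmul : A →L[ℂ] B →L[ℂ] T) : Prop where
  norm_tmul_le : ∀ a b, ‖tmul a b‖ ≤ ‖a‖ * ‖b‖
  tmul_mul_tmul : ∀ a₁ b₁ a₂ b₂, tmul a₁ b₁ * tmul a₂ b₂ = tmul (a₁ * a₂) (b₁ * b₂)
  exists_approx_rep : ∀ (t : T) (ε : ℝ), 0 < ε → ∃ (n : ℕ) (a : Fin n → A) (b : Fin n → B),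
    ‖t - ∑ i, tmul (a i) (b i)‖ < ε ∧ ∑ i, ‖a i‖ * ‖b i‖ ≤ ‖t‖ + ε
  exists_lift_functional : ∀ f : A →L[ℂ] B →L[ℂ] ℂ,
    ∃ g : T →L[ℂ] ℂ, ∀ a b, g (tmul a b) = f a b

/-- The double adjoint (second transpose) `h** : X** → Y**` of a continuous linear map
`h : X → Y`. -/
def bidualMap {X : Type*} {Y : Type*} [SeminormedAddCommGroup X] [NormedSpace ℂ X]
    [SeminormedAddCommGroup Y] [NormedSpace ℂ Y] (h : X →L[ℂ] Y) (m : Bidual X) : Bidual Y :=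
  m.comp ((ContinuousLinearMap.compL ℂ X Y ℂ).flip h)

/-- **Lemma 2.2.** Every amenable Banach algebra has an ultra central approximate identity.
Here amenability of `A` is expressed through the existence of a virtual diagonal: an element
`m` of the bidual of the projective tensor product `T = A ⊗_p A` (with its canonical
`A`-bimodule actions `L a (b ⊗ c) = (a * b) ⊗ c` and `R a (b ⊗ c) = b ⊗ (c * a)`, extended to
`T**` by taking double adjoints) such that `a · m = m · a` for all `a ∈ A` and
`π_A**(m) · a = a` for all `a ∈ A`, where `π_A : A ⊗_p A → A` is the product map. -/
theorem hasUltraCentralApproximateIdentity_of_amenable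
    (A : Type u) [NonUnitalNormedRing A] [NormedSpace ℂ A]
    [IsScalarTower ℂ A A] [SMulCommClass ℂ A A] [CompleteSpace A]
    (T : Type w) [NonUnitalNormedRing T] [NormedSpace ℂ T]
    [IsScalarTower ℂ T T] [SMulCommClass ℂ T T] [CompleteSpace T]
    (tmul : A →L[ℂ] A →L[ℂ] T) (hT : IsProjectiveTensorProduct A A T tmul)
    (L R : A → T →L[ℂ] T)
    (hL : ∀ a b c, L a (tmul b c) = tmul (a * b) c)
    (hR : ∀ a b c, R a (tmul b c) = tmul b (c * a))
    (π : T →L[ℂ] A) (hπ : ∀ a b, π (tmul a b) = a * b)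
    (hm : ∃ m : Bidual T, (∀ a : A, bidualMap (L a) m = bidualMap (R a) m) ∧
      ∀ a : A, bidualRSMul (bidualMap π m) a = NormedSpace.inclusionInDoubleDual ℂ A a) :
    HasUltraCentralApproximateIdentity A := by
  obtain ⟨m, hcent, hid⟩ := hm
  -- density: two maps agreeing on elementary tensors agree
  have hdense : ∀ g h : T →L[ℂ] A, (∀ b c, g (tmul b c) = h (tmul b c)) → g = h := by
    intro g h hgh
    ext t
    have key : ∀ ε : ℝ, 0 < ε → ‖g t - h t‖ ≤ (‖g - h‖ + 1) * ε := by
      intro ε hε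
      obtain ⟨n, a, b, hclose, -⟩ := hT.exists_approx_rep t ε hε
      have hs : (g - h) (∑ i, tmul (a i) (b i)) = 0 := by
        simp [map_sum, hgh, sub_eq_zero]
      have : ‖g t - h t‖ = ‖(g - h) (t - ∑ i, tmul (a i) (b i))‖ := by
        simp [map_sub, hs]
      rw [this]
      calc ‖(g - h) (t - ∑ i, tmul (a i) (b i))‖
          ≤ ‖g - h‖ * ‖t - ∑ i, tmul (a i) (b i)‖ := (g - h).le_opNorm _
        _ ≤ (‖g - h‖ + 1) * ε := by
            apply mul_le_mul (by linarith) hclose.le (norm_nonneg _) (by positivity)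
    have hle : ‖g t - h t‖ ≤ 0 := by
      by_contra hlt
      push_neg at hlt
      have hc : (0:ℝ) < ‖g - h‖ + 1 := by positivity
      have := key (‖g t - h t‖ / (2 * (‖g - h‖ + 1)))
        (by positivity)
      rw [mul_div_assoc'] at this
      rw [le_div_iff₀ (by positivity)] at this
      nlinarith [norm_nonneg (g t - h t)]
    have := le_antisymm hle (norm_nonneg _)
    rwa [norm_eq_zero, sub_eq_zero] at this
  have hπL : ∀ a : A, π.comp (L a) = (ContinuousLinearMap.mul ℂ A a).comp π := by
    intro a
    apply hdense
    intro b c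
    simp [hL, hπ, mul_assoc]
  have hπR : ∀ a : A,
      π.comp (R a) = ((ContinuousLinearMap.mul ℂ A).flip a).comp π := by
    intro a
    apply hdense
    intro b c
    simp [hR, hπ, mul_assoc]
  set e : Bidual A := bidualMap π m with he
  have hLS : ∀ a : A,
      bidualLSMul a e = bidualMap ((ContinuousLinearMap.mul ℂ A a).comp π) m := by
    intro a; ext f; rfl
  have hRS : ∀ a : A,
      bidualRSMul e a
        = bidualMap (((ContinuousLinearMap.mul ℂ A).flip a).comp π) m := by
    intro a; ext f; rfl
  have hcompL : ∀ a : A,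
      bidualMap (π.comp (L a)) m = bidualMap π (bidualMap (L a) m) := by
    intro a; ext f; rfl
  have hcompR : ∀ a : A,
      bidualMap (π.comp (R a)) m = bidualMap π (bidualMap (R a) m) := by
    intro a; ext f; rfl
  have hcentral : ∀ a : A, bidualLSMul a e = bidualRSMul e a := by
    intro a
    rw [hLS, hRS, ← hπL, ← hπR, hcompL, hcompR, hcent]
  refine ⟨PUnit, inferInstance, inferInstance, inferInstance, fun _ => e,
    fun a _ => hcentral a, fun a => ?_⟩
  have : (fun _ : PUnit => bidualRSMul e a)
      = fun _ : PUnit => NormedSpace.inclusionInDoubleDual ℂ A a := by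
    funext _; exact hid a
  rw [this]
  exact tendsto_const_nhds
end
end

section
/- Every Banach algebra with a bounded approximate identity has an ultra central approximate identity. -/
noncomputable section

open scoped Topology Classical

universe u v

/-- A *bounded approximate identity* for a Banach algebra `A` is a norm-bounded net `(e α)`
in `A` such that `e α * a → a` and `a * e α → a` in norm for every `a ∈ A`. -/
def HasBoundedApproximateIdentity (A : Type u) [NonUnitalNormedRing A] : Prop :=
  ∃ (ι : Type u) (_ : Preorder ι) (_ : Nonempty ι) (_ : IsDirected ι (· ≤ ·)) (e : ι → A)
    (C : ℝ), (∀ α : ι, ‖e α‖ ≤ C) ∧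
    ∀ a : A, Filter.Tendsto (fun α => e α * a) Filter.atTop (𝓝 a) ∧
      Filter.Tendsto (fun α => a * e α) Filter.atTop (𝓝 a)

/-- Every Banach algebra with a bounded approximate identity has an ultra central
approximate identity. -/
theorem hasUltraCentralApproximateIdentity_of_hasBoundedApproximateIdentity
    (A : Type u) [NonUnitalNormedRing A] [NormedSpace ℂ A]
    [IsScalarTower ℂ A A] [SMulCommClass ℂ A A] [CompleteSpace A]
    (h : HasBoundedApproximateIdentity A) :
    HasUltraCentralApproximateIdentity A := by
  obtain ⟨ι, _, _, _, e, C, hC, he⟩ := h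
  haveI : Filter.NeBot (Filter.atTop : Filter ι) :=
    Filter.atTop_neBot_iff.mpr ⟨‹_›, ‹_›⟩
  set U : Ultrafilter ι := Ultrafilter.of Filter.atTop with hUdef
  have hU : (U : Filter ι) ≤ Filter.atTop := Ultrafilter.of_le _
  have hC0 : 0 ≤ C := le_trans (norm_nonneg _) (hC (Classical.arbitrary ι))
  have key : ∀ f : StrongDual ℂ A, ∃ z : ℂ,
      Filter.Tendsto (fun α => f (e α)) U (𝓝 z) := by
    intro f
    have hmem : ∀ α, f (e α) ∈ Metric.closedBall (0 : ℂ) (‖f‖ * C) := by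
      intro α
      rw [Metric.mem_closedBall, dist_zero_right]
      exact (f.le_opNorm _).trans (mul_le_mul_of_nonneg_left (hC α) (norm_nonneg f))
    have hle : (U.map (fun α => f (e α)) : Filter ℂ) ≤
        Filter.principal (Metric.closedBall (0 : ℂ) (‖f‖ * C)) := by
      rw [Ultrafilter.coe_map, Filter.le_principal_iff, Filter.mem_map]
      exact Filter.Eventually.of_forall hmem
    obtain ⟨z, _, hz⟩ := (isCompact_closedBall (0 : ℂ) (‖f‖ * C)).ultrafilter_le_nhds
      (U.map (fun α => f (e α))) hle
    exact ⟨z, hz⟩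
  choose φ hφ using key
  have hadd : ∀ f g : StrongDual ℂ A, φ (f + g) = φ f + φ g := by
    intro f g
    refine tendsto_nhds_unique (hφ (f + g)) ?_
    simpa using (hφ f).add (hφ g)
  have hsmul : ∀ (c : ℂ) (f : StrongDual ℂ A), φ (c • f) = c • φ f := by
    intro c f
    refine tendsto_nhds_unique (hφ (c • f)) ?_
    simpa using (hφ f).const_smul c
  have hbd : ∀ f : StrongDual ℂ A, ‖φ f‖ ≤ C * ‖f‖ := by
    intro f
    refine le_of_tendsto (hφ f).norm (Filter.Eventually.of_forall fun α => ?_)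
    calc ‖f (e α)‖ ≤ ‖f‖ * ‖e α‖ := f.le_opNorm _
      _ ≤ ‖f‖ * C := mul_le_mul_of_nonneg_left (hC α) (norm_nonneg f)
      _ = C * ‖f‖ := mul_comm _ _
  set E : Bidual A := LinearMap.mkContinuous
    { toFun := φ, map_add' := hadd, map_smul' := hsmul } C hbd with hEdef
  have hEapp : ∀ f : StrongDual ℂ A, E f = φ f := fun _ => rfl
  have hL : ∀ a : A, bidualLSMul a E = NormedSpace.inclusionInDoubleDual ℂ A a := by
    intro a
    ext f
    have h1 : Filter.Tendsto (fun α => f (a * e α)) (U : Filter ι) (𝓝 (f a)) :=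
      (((f.continuous.tendsto a).comp (he a).2)).mono_left hU
    have h2 := hφ (((ContinuousLinearMap.compL ℂ A A ℂ).flip
      (ContinuousLinearMap.mul ℂ A a)) f)
    have h3 : φ (((ContinuousLinearMap.compL ℂ A A ℂ).flip
        (ContinuousLinearMap.mul ℂ A a)) f) = f a :=
      tendsto_nhds_unique h2 h1
    simpa [bidualLSMul, NormedSpace.inclusionInDoubleDual, hEapp] using h3
  have hR : ∀ a : A, bidualRSMul E a = NormedSpace.inclusionInDoubleDual ℂ A a := by
    intro a
    ext f
    have h1 : Filter.Tendsto (fun α => f (e α * a)) (U : Filter ι) (𝓝 (f a)) :=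
      (((f.continuous.tendsto a).comp (he a).1)).mono_left hU
    have h2 := hφ (((ContinuousLinearMap.compL ℂ A A ℂ).flip
      ((ContinuousLinearMap.mul ℂ A).flip a)) f)
    have h3 : φ (((ContinuousLinearMap.compL ℂ A A ℂ).flip
        ((ContinuousLinearMap.mul ℂ A).flip a)) f) = f a :=
      tendsto_nhds_unique h2 h1
    simpa [bidualRSMul, NormedSpace.inclusionInDoubleDual, hEapp] using h3
  refine ⟨PUnit, inferInstance, inferInstance, inferInstance, fun _ => E, ?_, ?_⟩
  · intro a _
    rw [hL a, hR a]
  · intro a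
    simp only [hR a]
    exact tendsto_const_nhds
end
end

section
/- Let S = ℕ with multiplication st = min(s,t) and let w(n) = eⁿ. Then the weighted semigroup algebra ℓ¹(S,w) has a central approximate identity but does not have a bounded approximate identity. -/
noncomputable section

open scoped Topology Classical

universe u

/-- A *central approximate identity* for a Banach algebra `A` is a net `(e α)` in `A` such
that `a * e α = e α * a` for all `a` and `e α * a → a` in norm for every `a ∈ A`. -/
def HasCentralApproximateIdentity (A : Type u) [NonUnitalNormedRing A] : Prop :=
  ∃ (ι : Type u) (_ : Preorder ι) (_ : Nonempty ι) (_ : IsDirected ι (· ≤ ·)) (e : ι → A),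
    (∀ (a : A) (α : ι), a * e α = e α * a) ∧
    ∀ a : A, Filter.Tendsto (fun α => e α * a) Filter.atTop (𝓝 a)

/-- **Example 2.5 (first part).**  Let `S = ℕ` be the commutative semigroup with
multiplication `s * t = min s t` and let `w n = eⁿ`.  Then the weighted semigroup algebra
`B = ℓ¹(S, w)` — realized as a Banach algebra together with the point masses `δ : ℕ → B`,
which multiply according to `S`, carry the weighted `ℓ¹`-norm on finitely supported
combinations, and have dense linear span — has a central approximate identity but does not
have a bounded approximate identity. -/
theorem weightedL1_minNat_central_not_bounded
    (B : Type u) [NonUnitalNormedRing B] [NormedSpace ℂ B]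
    [IsScalarTower ℂ B B] [SMulCommClass ℂ B B] [CompleteSpace B]
    (δ : ℕ → B)
    (hmul : ∀ s t : ℕ, δ s * δ t = δ (min s t))
    (hnorm : ∀ x : ℕ →₀ ℂ,
      ‖x.sum fun s c => c • δ s‖ = x.sum fun s c => ‖c‖ * Real.exp s)
    (hdense : DenseRange fun x : ℕ →₀ ℂ => x.sum fun s c => c • δ s) :
    HasCentralApproximateIdentity B ∧ ¬ HasBoundedApproximateIdentity B := by
  set T : (ℕ →₀ ℂ) → B := fun x => x.sum fun s c => c • δ s with hT
  -- norm of point masses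
  have hδnorm : ∀ n : ℕ, ‖δ n‖ = Real.exp n := by
    intro n
    have := hnorm (Finsupp.single n 1)
    rw [Finsupp.sum_single_index (by simp), Finsupp.sum_single_index (by simp)] at this
    simpa using this
  -- δ n * T x expansion
  have hmulT : ∀ (n : ℕ) (x : ℕ →₀ ℂ),
      δ n * T x = x.sum fun s c => c • δ (min n s) := by
    intro n x
    rw [hT]
    rw [Finsupp.mul_sum]
    refine Finsupp.sum_congr fun s _ => ?_
    rw [mul_smul_comm, hmul]
  -- key contractivity: ‖δ n * b‖ ≤ ‖b‖
  have hkey : ∀ (n : ℕ) (b : B), ‖δ n * b‖ ≤ ‖b‖ := by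
    intro n
    have hcl : IsClosed {b : B | ‖δ n * b‖ ≤ ‖b‖} := by
      apply isClosed_le
      · exact (continuous_const.mul continuous_id).norm
      · exact continuous_norm
    refine fun b => hdense.induction_on b hcl fun x => ?_
    show ‖δ n * T x‖ ≤ ‖T x‖
    rw [hmulT, hnorm x]
    calc ‖x.sum fun s c => c • δ (min n s)‖
        ≤ x.sum fun s c => ‖c • δ (min n s)‖ := norm_sum_le _ _
      _ ≤ x.sum fun s c => ‖c‖ * Real.exp s := by
          refine Finset.sum_le_sum fun s _ => ?_
          simp only []
          rw [norm_smul, hδnorm]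
          exact mul_le_mul_of_nonneg_left
            (Real.exp_le_exp.2 (by exact_mod_cast min_le_right n s)) (norm_nonneg _)
  -- commutation with δ n
  have hcomm : ∀ (b : B) (n : ℕ), b * δ n = δ n * b := by
    intro b n
    have hcl : IsClosed {b : B | b * δ n = δ n * b} :=
      isClosed_eq (continuous_id.mul continuous_const) (continuous_const.mul continuous_id)
    refine hdense.induction_on b hcl fun x => ?_
    show T x * δ n = δ n * T x
    rw [hmulT, hT, Finsupp.sum_mul]
    refine Finsupp.sum_congr fun s _ => ?_
    rw [smul_mul_assoc, hmul, min_comm]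
  -- eventual identity on finitely supported elements
  have hev : ∀ (x : ℕ →₀ ℂ) (n : ℕ), x.support.sup id ≤ n → δ n * T x = T x := by
    intro x n hn
    rw [hmulT, hT]
    refine Finsupp.sum_congr fun s hs => ?_
    have : s ≤ n := le_trans (Finset.le_sup (f := id) hs) hn
    rw [min_eq_right this]
  constructor
  · -- central approximate identity
    refine ⟨ULift.{u} ℕ, inferInstance, ⟨⟨0⟩⟩,
      ⟨fun a b => ⟨⟨max a.down b.down⟩, le_max_left a.down b.down, le_max_right a.down b.down⟩⟩,
      fun i => δ i.down, fun a i => hcomm a i.down, fun a => ?_⟩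
    rw [Metric.tendsto_nhds]
    intro ε hε
    obtain ⟨x, hx⟩ := hdense.exists_dist_lt a (half_pos hε)
    have hN : ∀ n : ℕ, x.support.sup id ≤ n → dist (δ n * a) a < ε := by
      intro n hn
      have h1 : dist (δ n * a) a ≤ ‖δ n * a - δ n * T x‖ + ‖T x - a‖ := by
        rw [dist_eq_norm]
        calc ‖δ n * a - a‖ = ‖(δ n * a - δ n * T x) + (T x - a) + (δ n * T x - T x)‖ := by
              congr 1; abel
          _ = ‖(δ n * a - δ n * T x) + (T x - a)‖ := by rw [hev x n hn, sub_self, add_zero]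
          _ ≤ ‖δ n * a - δ n * T x‖ + ‖T x - a‖ := norm_add_le _ _
      have h2 : ‖δ n * a - δ n * T x‖ ≤ ‖a - T x‖ := by
        rw [← mul_sub]; exact hkey n _
      have h3 : ‖a - T x‖ < ε / 2 := by rw [← dist_eq_norm]; exact hx
      have h4 : ‖T x - a‖ < ε / 2 := by rw [norm_sub_rev]; exact h3
      calc dist (δ n * a) a ≤ ‖δ n * a - δ n * T x‖ + ‖T x - a‖ := h1
        _ < ε / 2 + ε / 2 := by
            exact add_lt_add_of_le_of_lt (le_trans h2 h3.le) h4
        _ = ε := add_halves ε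
    refine (Filter.eventually_ge_atTop (⟨x.support.sup id⟩ : ULift.{u} ℕ)).mono fun i hi => ?_
    exact hN i.down hi
  · -- no bounded approximate identity
    rintro ⟨ι, hpre, hne, hdir, e, C, hC, htend⟩
    have hNeBot : (Filter.atTop : Filter ι).NeBot := Filter.atTop_neBot_iff.2 ⟨hne, hdir⟩
    have hle : ∀ n : ℕ, Real.exp n ≤ C := by
      intro n
      have h1 : Filter.Tendsto (fun α => δ n * e α) Filter.atTop (𝓝 (δ n)) := (htend (δ n)).2
      have h2 : Filter.Tendsto (fun α => ‖δ n * e α‖) Filter.atTop (𝓝 ‖δ n‖) := h1.norm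
      have h3 : ‖δ n‖ ≤ C :=
        le_of_tendsto h2 (Filter.Eventually.of_forall fun α =>
          le_trans (hkey n (e α)) (hC α))
      rwa [hδnorm] at h3
    obtain ⟨n, hn⟩ := exists_nat_gt C
    have := hle n
    have : (n : ℝ) < Real.exp n := by
      have := Real.add_one_le_exp (n : ℝ)
      linarith
    linarith [hle n]
end
end

section
/- Let (A_λ)_{λ∈Λ} be a family of Banach algebras and let A = ℓ¹-⊕_{λ∈Λ} A_λ be their ℓ¹-direct sum. If A has an ultra central approximate identity, then each A_λ has an ultra central approximate identity. -/
noncomputable section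

open scoped Topology Classical

universe u v w

/-- `B`, together with the coordinate embeddings `e l : A l →ₗ[ℂ] B`, is (a realization of)
the `ℓ¹`-direct sum `ℓ¹-⊕_{l ∈ Λ} A l` of the family of Banach algebras `(A l)`:
the embeddings have orthogonal multiplicative ranges, finite sums of coordinates carry the
`ℓ¹`-norm, and they are dense in `B`. -/
structure IsL1DirectSum {Λ : Type v} (A : Λ → Type w) [∀ l, NonUnitalNormedRing (A l)]
    [∀ l, NormedSpace ℂ (A l)] [∀ l, IsScalarTower ℂ (A l) (A l)]
    [∀ l, SMulCommClass ℂ (A l) (A l)]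
    (B : Type u) [NonUnitalNormedRing B] [NormedSpace ℂ B] [IsScalarTower ℂ B B]
    [SMulCommClass ℂ B B] [CompleteSpace B] (e : ∀ l, A l →ₗ[ℂ] B) : Prop where
  mul_same : ∀ (l : Λ) (x y : A l), e l x * e l y = e l (x * y)
  mul_ne : ∀ (l m : Λ) (x : A l) (y : A m), l ≠ m → e l x * e m y = 0
  norm_sum : ∀ (s : Finset Λ) (x : ∀ l, A l), ‖∑ l ∈ s, e l (x l)‖ = ∑ l ∈ s, ‖x l‖
  dense : DenseRange fun p : Finset Λ × (∀ l, A l) => ∑ l ∈ p.1, e l (p.2 l)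

open scoped DirectSum

/-- Existence of the norm-one coordinate projection `B → A l` of an `ℓ¹`-direct sum. -/
theorem exists_l1_proj
    {Λ : Type v} {A : Λ → Type u} [∀ l, NonUnitalNormedRing (A l)]
    [∀ l, NormedSpace ℂ (A l)] [∀ l, IsScalarTower ℂ (A l) (A l)]
    [∀ l, SMulCommClass ℂ (A l) (A l)] [∀ l, CompleteSpace (A l)]
    {B : Type u} [NonUnitalNormedRing B] [NormedSpace ℂ B] [IsScalarTower ℂ B B]
    [SMulCommClass ℂ B B] [CompleteSpace B] {e : ∀ l, A l →ₗ[ℂ] B}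
    (mul_same : ∀ (l : Λ) (x y : A l), e l x * e l y = e l (x * y))
    (mul_ne : ∀ (l m : Λ) (x : A l) (y : A m), l ≠ m → e l x * e m y = 0)
    (norm_sum : ∀ (s : Finset Λ) (x : ∀ l, A l), ‖∑ l ∈ s, e l (x l)‖ = ∑ l ∈ s, ‖x l‖)
    (dense : DenseRange fun p : Finset Λ × (∀ l, A l) => ∑ l ∈ p.1, e l (p.2 l))
    (l : Λ) :
    ∃ P : B →L[ℂ] A l, (∀ a : A l, P (e l a) = a) ∧
      (∀ (a : A l) (b : B), P (e l a * b) = a * P b) ∧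
      (∀ (a : A l) (b : B), P (b * e l a) = P b * a) := by
  classical
  set Ψ : (⨁ m, A m) →ₗ[ℂ] B := DirectSum.toModule ℂ Λ B e with hΨdef
  have hΨsum : ∀ x : ⨁ m, A m, Ψ x = ∑ m ∈ DFinsupp.support x, e m (x m) := by
    intro x
    conv_lhs => rw [← DirectSum.sum_support_of x]
    rw [map_sum]
    exact Finset.sum_congr rfl fun m _ => by
      rw [← DirectSum.lof_eq_of ℂ, DirectSum.toModule_lof]
  have hnorm : ∀ x : ⨁ m, A m, ‖Ψ x‖ = ∑ m ∈ DFinsupp.support x, ‖x m‖ := by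
    intro x
    rw [hΨsum]
    exact norm_sum _ (fun m => x m)
  have hbound : ∀ x : ⨁ m, A m, ‖x l‖ ≤ ‖Ψ x‖ := by
    intro x
    rw [hnorm]
    by_cases hl : l ∈ DFinsupp.support x
    · exact Finset.single_le_sum (fun m _ => norm_nonneg _) hl
    · rw [DFinsupp.notMem_support_iff.mp hl, norm_zero]
      exact Finset.sum_nonneg fun m _ => norm_nonneg _
  have hinj : Function.Injective Ψ := by
    intro x y hxy
    have h0 : Ψ (x - y) = 0 := by rw [map_sub, hxy, sub_self]
    have hs : DFinsupp.support (x - y) = ∅ := by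
      by_contra hne
      obtain ⟨m, hm⟩ := Finset.nonempty_iff_ne_empty.mpr hne
      have h1 : ‖(x - y) m‖ ≤ 0 := by
        calc ‖(x - y) m‖ ≤ ∑ k ∈ DFinsupp.support (x - y), ‖(x - y) k‖ :=
              Finset.single_le_sum (fun _ _ => norm_nonneg _) hm
          _ = ‖Ψ (x - y)‖ := (hnorm _).symm
          _ = 0 := by rw [h0, norm_zero]
      exact (DFinsupp.mem_support_iff.mp hm) (norm_le_zero_iff.mp h1)
    exact sub_eq_zero.mp (DFinsupp.support_eq_empty.mp hs)
  set S : Submodule ℂ B := LinearMap.range Ψ with hSdef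
  let eqv : (⨁ m, A m) ≃ₗ[ℂ] S := LinearEquiv.ofInjective Ψ hinj
  let g : S →ₗ[ℂ] A l := (DirectSum.component ℂ Λ A l).comp eqv.symm.toLinearMap
  have hgΨ : ∀ x : ⨁ m, A m, g ⟨Ψ x, LinearMap.mem_range_self Ψ x⟩ = x l := by
    intro x
    have h1 : (⟨Ψ x, LinearMap.mem_range_self Ψ x⟩ : S) = eqv x :=
      Subtype.ext (LinearEquiv.ofInjective_apply Ψ x).symm
    show (DirectSum.component ℂ Λ A l) (eqv.symm ⟨Ψ x, LinearMap.mem_range_self Ψ x⟩) = x l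
    rw [h1, eqv.symm_apply_apply]
    rfl
  have hgbound : ∀ y : S, ‖g y‖ ≤ 1 * ‖y‖ := by
    intro y
    obtain ⟨x, hx⟩ := y.2
    have hy : y = ⟨Ψ x, LinearMap.mem_range_self Ψ x⟩ := Subtype.ext hx.symm
    rw [hy, hgΨ, one_mul]
    exact hbound x
  let gc : S →L[ℂ] A l := g.mkContinuous 1 hgbound
  have hdense : DenseRange (S.subtypeL : S →L[ℂ] B) := by
    have h1 : Set.range (fun p : Finset Λ × (∀ m, A m) => ∑ m ∈ p.1, e m (p.2 m)) ⊆
        Set.range (S.subtypeL : S →L[ℂ] B) := by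
      rintro c ⟨⟨s, x⟩, rfl⟩
      refine ⟨⟨∑ m ∈ s, e m (x m), ⟨∑ m ∈ s, DirectSum.lof ℂ Λ A m (x m), ?_⟩⟩, rfl⟩
      rw [map_sum]
      exact Finset.sum_congr rfl fun m _ => DirectSum.toModule_lof ℂ m (x m)
    exact dense.mono h1
  have hui : IsUniformInducing (S.subtypeL : S →L[ℂ] B) :=
    isometry_subtype_coe.isUniformInducing
  let P : B →L[ℂ] A l := gc.extend S.subtypeL
  have hPΨ : ∀ x : ⨁ m, A m, P (Ψ x) = x l := by
    intro x
    have h1 : P (S.subtypeL ⟨Ψ x, LinearMap.mem_range_self Ψ x⟩) =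
        gc ⟨Ψ x, LinearMap.mem_range_self Ψ x⟩ :=
      ContinuousLinearMap.extend_eq (f := gc) (e := S.subtypeL) hdense hui _
    calc P (Ψ x) = gc ⟨Ψ x, LinearMap.mem_range_self Ψ x⟩ := h1
      _ = x l := hgΨ x
  have hPsum : ∀ (s : Finset Λ) (x : ∀ m, A m),
      P (∑ m ∈ s, e m (x m)) = if l ∈ s then x l else 0 := by
    intro s x
    have h1 : (∑ m ∈ s, e m (x m)) = Ψ (∑ m ∈ s, DirectSum.lof ℂ Λ A m (x m)) := by
      rw [map_sum]
      exact (Finset.sum_congr rfl fun m _ => (DirectSum.toModule_lof ℂ m (x m)).symm)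
    rw [h1, hPΨ, DirectSum.apply_eq_component ℂ, map_sum]
    have h2 : ∀ m ∈ s, DirectSum.component ℂ Λ A l (DirectSum.lof ℂ Λ A m (x m)) =
        if m = l then x l else 0 := by
      intro m _
      by_cases h : m = l
      · subst h
        rw [if_pos rfl, DirectSum.component.lof_self]
      · rw [if_neg h, DirectSum.component.of]
        exact dif_neg h
    rw [Finset.sum_congr rfl h2, Finset.sum_ite_eq' s l (fun _ => x l)]
  have hPel : ∀ a : A l, P (e l a) = a := by
    intro a
    have h1 : e l a = Ψ (DirectSum.lof ℂ Λ A l a) := (DirectSum.toModule_lof ℂ l a).symm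
    rw [h1, hPΨ, DirectSum.lof_apply ℂ]
  refine ⟨P, hPel, ?_, ?_⟩
  · intro a
    have hcont1 : Continuous fun b : B => P (e l a * b) :=
      P.continuous.comp (continuous_mul_left (e l a))
    have hcont2 : Continuous fun b : B => a * P b :=
      (continuous_mul_left a).comp P.continuous
    have heq : Set.EqOn (fun b : B => P (e l a * b)) (fun b : B => a * P b)
        (Set.range fun p : Finset Λ × (∀ m, A m) => ∑ m ∈ p.1, e m (p.2 m)) := by
      rintro c ⟨⟨s, x⟩, rfl⟩
      simp only
      rw [Finset.mul_sum]
      have h2 : ∀ m ∈ s, e l a * e m (x m) = if m = l then e l (a * x l) else 0 := by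
        intro m _
        by_cases h : m = l
        · subst h; rw [if_pos rfl, mul_same]
        · rw [if_neg h]; exact mul_ne l m a (x m) (fun hh => h hh.symm)
      rw [Finset.sum_congr rfl h2, Finset.sum_ite_eq' s l (fun _ => e l (a * x l)), hPsum s x]
      by_cases hls : l ∈ s
      · rw [if_pos hls, if_pos hls, hPel]
      · rw [if_neg hls, if_neg hls, map_zero, mul_zero]
    have := Continuous.ext_on dense hcont1 hcont2 heq
    exact fun b => congrFun this b
  · intro a
    have hcont1 : Continuous fun b : B => P (b * e l a) :=
      P.continuous.comp (continuous_mul_right (e l a))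
    have hcont2 : Continuous fun b : B => P b * a :=
      (continuous_mul_right a).comp P.continuous
    have heq : Set.EqOn (fun b : B => P (b * e l a)) (fun b : B => P b * a)
        (Set.range fun p : Finset Λ × (∀ m, A m) => ∑ m ∈ p.1, e m (p.2 m)) := by
      rintro c ⟨⟨s, x⟩, rfl⟩
      simp only
      rw [Finset.sum_mul]
      have h2 : ∀ m ∈ s, e m (x m) * e l a = if m = l then e l (x l * a) else 0 := by
        intro m _
        by_cases h : m = l
        · subst h; rw [if_pos rfl, mul_same]
        · rw [if_neg h]; exact mul_ne m l (x m) a h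
      rw [Finset.sum_congr rfl h2, Finset.sum_ite_eq' s l (fun _ => e l (x l * a)), hPsum s x]
      by_cases hls : l ∈ s
      · rw [if_pos hls, if_pos hls, hPel]
      · rw [if_neg hls, if_neg hls, map_zero, zero_mul]
    have := Continuous.ext_on dense hcont1 hcont2 heq
    exact fun b => congrFun this b

/-- If the `ℓ¹`-direct sum `B = ℓ¹-⊕_{l ∈ Λ} A l` of a family of Banach algebras has an
ultra central approximate identity, then so does each summand `A l`. -/
theorem hasUltraCentralApproximateIdentity_of_l1DirectSum
    {Λ : Type v} (A : Λ → Type u) [∀ l, NonUnitalNormedRing (A l)]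
    [∀ l, NormedSpace ℂ (A l)] [∀ l, IsScalarTower ℂ (A l) (A l)]
    [∀ l, SMulCommClass ℂ (A l) (A l)] [∀ l, CompleteSpace (A l)]
    (B : Type u) [NonUnitalNormedRing B] [NormedSpace ℂ B] [IsScalarTower ℂ B B]
    [SMulCommClass ℂ B B] [CompleteSpace B] (e : ∀ l, A l →ₗ[ℂ] B)
    (hB : IsL1DirectSum A B e) (h : HasUltraCentralApproximateIdentity B) :
    ∀ l : Λ, HasUltraCentralApproximateIdentity (A l) := by
  intro l
  obtain ⟨P, hPe, hPl, hPr⟩ := exists_l1_proj hB.mul_same hB.mul_ne hB.norm_sum hB.dense l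
  obtain ⟨ι, pre, ne, dir, E, hc, ht⟩ := h
  let Q : StrongDual ℂ (A l) →L[ℂ] StrongDual ℂ B :=
    (ContinuousLinearMap.compL ℂ B (A l) ℂ).flip P
  let T : Bidual B →L[ℂ] Bidual (A l) :=
    (ContinuousLinearMap.compL ℂ (StrongDual ℂ (A l)) (StrongDual ℂ B) ℂ).flip Q
  have hT : ∀ (m : Bidual B) (f : StrongDual ℂ (A l)), T m f = m (f.comp P) :=
    fun m f => rfl
  have hL : ∀ (a : A l) (m : Bidual B), bidualLSMul a (T m) = T (bidualLSMul (e l a) m) := by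
    intro a m
    ext f
    have hfun : ((f.comp (ContinuousLinearMap.mul ℂ (A l) a)).comp P : B →L[ℂ] ℂ)
        = (f.comp P).comp (ContinuousLinearMap.mul ℂ B (e l a)) := by
      ext b
      simp [hPl a b]
    calc bidualLSMul a (T m) f
        = (T m) (f.comp (ContinuousLinearMap.mul ℂ (A l) a)) := rfl
      _ = m ((f.comp (ContinuousLinearMap.mul ℂ (A l) a)).comp P) := hT m _
      _ = m ((f.comp P).comp (ContinuousLinearMap.mul ℂ B (e l a))) := by rw [hfun]
      _ = (bidualLSMul (e l a) m) (f.comp P) := rfl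
      _ = T (bidualLSMul (e l a) m) f := (hT _ f).symm
  have hR : ∀ (a : A l) (m : Bidual B), bidualRSMul (T m) a = T (bidualRSMul m (e l a)) := by
    intro a m
    ext f
    have hfun : ((f.comp ((ContinuousLinearMap.mul ℂ (A l)).flip a)).comp P : B →L[ℂ] ℂ)
        = (f.comp P).comp ((ContinuousLinearMap.mul ℂ B).flip (e l a)) := by
      ext b
      simp [hPr a b]
    calc bidualRSMul (T m) a f
        = (T m) (f.comp ((ContinuousLinearMap.mul ℂ (A l)).flip a)) := rfl
      _ = m ((f.comp ((ContinuousLinearMap.mul ℂ (A l)).flip a)).comp P) := hT m _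
      _ = m ((f.comp P).comp ((ContinuousLinearMap.mul ℂ B).flip (e l a))) := by rw [hfun]
      _ = (bidualRSMul m (e l a)) (f.comp P) := rfl
      _ = T (bidualRSMul m (e l a)) f := (hT _ f).symm
  have hiota : ∀ b : B, T (NormedSpace.inclusionInDoubleDual ℂ B b)
      = NormedSpace.inclusionInDoubleDual ℂ (A l) (P b) := by
    intro b
    ext f
    rw [hT]
    simp [NormedSpace.dual_def]
  refine ⟨ι, pre, ne, dir, fun α => T (E α), ?_, ?_⟩
  · intro a α
    rw [hL, hc (e l a), ← hR]
  · intro a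
    have h1 : (fun α => bidualRSMul (T (E α)) a) = fun α => T (bidualRSMul (E α) (e l a)) := by
      funext α
      rw [hR]
    rw [h1]
    have h2 := (T.continuous.tendsto _).comp (ht (e l a))
    simpa [Function.comp_def, hiota, hPe] using h2
end
end
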